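/- Lévy-type inequality of Montgomery–Smith: there is a universal constant C such that for any i.i.d. sequence W_1,...,W_n in a Banach space and any t > 0, P( max_{k ≤ n} ‖∑_{i=1}^k W_i‖ ≥ t ) ≤ C · P( ‖∑_{i=1}^n W_i‖ ≥ t/C ). -/

import Mathlib

open MeasureTheory
open scoped BigOperators

section MSHelpers

set_option linter.unusedSectionVars false
set_option linter.unusedVariables false
set_option maxHeartbeats 1000000

variable {Ω : Type} [MeasurableSpace Ω] {μ : Measure Ω} [IsProbabilityMeasure μ]
variable {B : Type} [instB : NormedAddCommGroup B] [instB2 : NormedSpace ℝ B] [instB3 : MeasurableSpace B] [BorelSpace B]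
  [SecondCountableTopology B] {W : ℕ → Ω → B}

private lemma msl_meas_sum (hW : ∀ i, Measurable (W i)) (s : Finset ℕ) :
    Measurable (fun ω => ∑ i ∈ s, W i ω) :=
  Finset.measurable_sum s (fun i _ => hW i)

private lemma msl_indep (hW : ∀ i, Measurable (W i))
    (hind : ProbabilityTheory.iIndepFun (m := fun _ => instB3) W μ)
    (s t : Finset ℕ) (hst : Disjoint s t) :
    ProbabilityTheory.IndepFun (fun ω => ∑ i ∈ s, W i ω) (fun ω => ∑ i ∈ t, W i ω) μ := by
  have h := hind.indepFun_finset s t hst hW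
  have hsum : ∀ (r : Finset ℕ), Measurable (fun v : (↥r → B) => ∑ i, v i) := fun r =>
    Finset.measurable_sum _ (fun i _ => measurable_pi_apply i)
  have h2 := h.comp (hsum s) (hsum t)
  convert h2 using 1 <;> funext ω <;> exact (Finset.sum_attach _ _).symm

private lemma msl_map_eq (hW : ∀ i, Measurable (W i))
    (hind : ProbabilityTheory.iIndepFun (m := fun _ => instB3) W μ)
    (hid : ∀ i, ProbabilityTheory.IdentDistrib (W i) (W 0) μ μ) :
    ∀ (m : ℕ) (s t : Finset ℕ), s.card = m → t.card = m →
      Measure.map (fun ω => ∑ i ∈ s, W i ω) μ = Measure.map (fun ω => ∑ i ∈ t, W i ω) μ := by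
  intro m
  induction m with
  | zero =>
    intro s t hs ht
    rw [Finset.card_eq_zero] at hs ht; subst hs; subst ht
    rfl
  | succ m ih =>
    intro s t hs ht
    obtain ⟨a, ha⟩ := Finset.card_pos.mp (by omega : 0 < s.card)
    obtain ⟨b, hb⟩ := Finset.card_pos.mp (by omega : 0 < t.card)
    have key : ∀ (c : ℕ) (r : Finset ℕ), c ∈ r →
        Measure.map (fun ω => ∑ i ∈ r, W i ω) μ =
          Measure.map (fun p : B × B => p.1 + p.2)
            ((Measure.map (W 0) μ).prod (Measure.map (fun ω => ∑ i ∈ r.erase c, W i ω) μ)) := by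
      intro c r hc
      have hre : (fun ω => ∑ i ∈ r, W i ω) =
          (fun p : B × B => p.1 + p.2) ∘ (fun ω => (W c ω, ∑ i ∈ r.erase c, W i ω)) := by
        funext ω
        simp only [Function.comp]
        exact (Finset.add_sum_erase r (fun i => W i ω) hc).symm
      have hic : ProbabilityTheory.IndepFun (W c) (fun ω => ∑ i ∈ r.erase c, W i ω) μ := by
        have := msl_indep hW hind {c} (r.erase c)
          (Finset.disjoint_singleton_left.mpr (Finset.notMem_erase c r))
        simpa [Finset.sum_singleton] using this
      have hprod := (ProbabilityTheory.indepFun_iff_map_prod_eq_prod_map_map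
        (hW c).aemeasurable (msl_meas_sum hW (r.erase c)).aemeasurable).mp hic
      rw [hre, ← Measure.map_map measurable_add ((hW c).prodMk (msl_meas_sum hW (r.erase c))),
        hprod, (hid c).map_eq]
    rw [key a s ha, key b t hb,
      ih (s.erase a) (t.erase b) (by rw [Finset.card_erase_of_mem ha, hs]; omega)
        (by rw [Finset.card_erase_of_mem hb, ht]; omega)]

/-- Equality of probabilities of events defined by block sums with equal cardinality. -/
private lemma msl_prob_eq (hW : ∀ i, Measurable (W i))
    (hind : ProbabilityTheory.iIndepFun (m := fun _ => instB3) W μ)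
    (hid : ∀ i, ProbabilityTheory.IdentDistrib (W i) (W 0) μ μ)
    {s t : Finset ℕ} (hcard : s.card = t.card) {D : Set B} (hD : MeasurableSet D) :
    μ {ω | (∑ i ∈ s, W i ω) ∈ D} = μ {ω | (∑ i ∈ t, W i ω) ∈ D} := by
  have h := msl_map_eq hW hind hid s.card s t rfl hcard.symm
  have h1 := Measure.map_apply (msl_meas_sum hW s) hD (μ := μ)
  have h2 := Measure.map_apply (msl_meas_sum hW t) hD (μ := μ)
  rw [h] at h1
  have : (fun ω => ∑ i ∈ s, W i ω) ⁻¹' D = {ω | (∑ i ∈ s, W i ω) ∈ D} := rfl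
  rw [this] at h1
  have h3 : (fun ω => ∑ i ∈ t, W i ω) ⁻¹' D = {ω | (∑ i ∈ t, W i ω) ∈ D} := rfl
  rw [h3] at h2
  rw [← h1, ← h2]

private lemma msl_inter2 {A C : Set Ω} (hA : MeasurableSet A) :
    (μ A).toReal + (μ C).toReal ≤ 1 + (μ (A ∩ C)).toReal := by
  have h := measure_union_add_inter' hA C (μ := μ)
  have h1 : μ (A ∪ C) ≠ ⊤ := measure_ne_top μ _
  have h2 : μ (A ∩ C) ≠ ⊤ := measure_ne_top μ _
  have hle : (μ (A ∪ C)).toReal ≤ 1 := by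
    have := prob_le_one (μ := μ) (s := A ∪ C)
    simpa using ENNReal.toReal_mono (by norm_num) this
  have := congrArg ENNReal.toReal h
  rw [ENNReal.toReal_add h1 h2, ENNReal.toReal_add (measure_ne_top μ _) (measure_ne_top μ _)]
    at this
  linarith

private lemma msl_nonempty2 {A C : Set Ω} (hA : MeasurableSet A)
    (h : 1 < (μ A).toReal + (μ C).toReal) : (A ∩ C).Nonempty := by
  have h2 := msl_inter2 (μ := μ) hA (C := C)
  have hpos : 0 < (μ (A ∩ C)).toReal := by linarith
  have : μ (A ∩ C) ≠ 0 := by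
    intro h0; rw [h0] at hpos; simp at hpos
  exact nonempty_of_measure_ne_zero this

private lemma msl_nonempty3 {A C D : Set Ω} (hA : MeasurableSet A) (hC : MeasurableSet C)
    (h : 2 < (μ A).toReal + (μ C).toReal + (μ D).toReal) : (A ∩ C ∩ D).Nonempty := by
  have h2 := msl_inter2 (μ := μ) hA (C := C)
  exact msl_nonempty2 (hA.inter hC) (by linarith)

private lemma msl_center (hW : ∀ i, Measurable (W i))
    (hind : ProbabilityTheory.iIndepFun (m := fun _ => instB3) W μ)
    {n k : ℕ} (hk : k ≤ n) {u : ℝ}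
    (h4 : 3/4 ≤ (μ {ω | ‖∑ i ∈ Finset.range n, W i ω‖ ≤ u}).toReal) :
    ∃ a : B, 7/10 ≤ (μ {ω | ‖(∑ i ∈ Finset.range k, W i ω) - a‖ ≤ u}).toReal := by
  classical
  by_contra hcon
  push_neg at hcon
  set T : Ω → B := fun ω => ∑ i ∈ Finset.Ico k n, W i ω with hT
  set S : Ω → B := fun ω => ∑ i ∈ Finset.range k, W i ω with hS
  have hmeasT : Measurable T := Finset.measurable_sum _ (fun i _ => hW i)
  have hmeasS : Measurable S := Finset.measurable_sum _ (fun i _ => hW i)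
  have hsplit : ∀ ω, ∑ i ∈ Finset.range n, W i ω = T ω + S ω := by
    intro ω
    rw [add_comm]
    exact (Finset.sum_range_add_sum_Ico _ hk).symm
  have hdisj : Disjoint (Finset.Ico k n) (Finset.range k) := by
    simp only [Finset.disjoint_left, Finset.mem_Ico, Finset.mem_range]
    omega
  have hTS : ProbabilityTheory.IndepFun T S μ := by
    have h := hind.indepFun_finset (Finset.Ico k n) (Finset.range k) hdisj hW
    have hsum : ∀ (r : Finset ℕ), Measurable (fun v : (↥r → B) => ∑ i, v i) := fun r =>
      Finset.measurable_sum _ (fun i _ => measurable_pi_apply i)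
    have h2 := h.comp (hsum _) (hsum _)
    convert h2 using 1 <;> funext ω <;> exact (Finset.sum_attach _ _).symm
  have hprod := (ProbabilityTheory.indepFun_iff_map_prod_eq_prod_map_map
    hmeasT.aemeasurable hmeasS.aemeasurable).mp hTS
  have hnormmeas : Measurable (fun p : B × B => ‖p.1 + p.2‖) :=
    (measurable_fst.add measurable_snd).norm
  have hD : MeasurableSet {p : B × B | ‖p.1 + p.2‖ ≤ u} :=
    measurableSet_le hnormmeas measurable_const
  have e1 : μ {ω | ‖∑ i ∈ Finset.range n, W i ω‖ ≤ u}
      = (Measure.map (fun ω => (T ω, S ω)) μ) {p : B × B | ‖p.1 + p.2‖ ≤ u} := by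
    rw [Measure.map_apply (hmeasT.prodMk hmeasS) hD]
    congr 1
    ext ω
    simp only [Set.mem_setOf_eq, Set.mem_preimage, hsplit ω]
  have e2 : (Measure.map T μ).prod (Measure.map S μ) {p : B × B | ‖p.1 + p.2‖ ≤ u}
      = ∫⁻ x, (Measure.map S μ) (Prod.mk x ⁻¹' {p : B × B | ‖p.1 + p.2‖ ≤ u})
          ∂(Measure.map T μ) := Measure.prod_apply hD
  haveI : IsProbabilityMeasure (Measure.map T μ) :=
    Measure.isProbabilityMeasure_map hmeasT.aemeasurable
  have hbound : ∀ x : B, (Measure.map S μ) (Prod.mk x ⁻¹' {p : B × B | ‖p.1 + p.2‖ ≤ u})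
      ≤ ENNReal.ofReal (7/10) := by
    intro x
    have hset : Prod.mk x ⁻¹' {p : B × B | ‖p.1 + p.2‖ ≤ u} = {y : B | ‖y - (-x)‖ ≤ u} := by
      ext y
      simp only [Set.mem_preimage, Set.mem_setOf_eq, sub_neg_eq_add, add_comm]
    have hmy : Measurable fun y : B => ‖y - (-x)‖ := by fun_prop
    rw [hset, Measure.map_apply hmeasS (measurableSet_le hmy measurable_const)]
    have : (S ⁻¹' {y : B | ‖y - (-x)‖ ≤ u}) = {ω | ‖S ω - (-x)‖ ≤ u} := rfl
    rw [this]
    exact (ENNReal.le_ofReal_iff_toReal_le (measure_ne_top μ _) (by norm_num)).mpr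
      (hcon (-x)).le
  have hchain : ENNReal.ofReal (3/4) ≤ ENNReal.ofReal (7/10) := by
    calc ENNReal.ofReal (3/4) ≤ μ {ω | ‖∑ i ∈ Finset.range n, W i ω‖ ≤ u} :=
          ENNReal.ofReal_le_of_le_toReal h4
      _ = _ := by rw [e1, hprod, e2]
      _ ≤ ∫⁻ _, ENNReal.ofReal (7/10) ∂(Measure.map T μ) := lintegral_mono hbound
      _ = ENNReal.ofReal (7/10) := by simp
  have := (ENNReal.ofReal_le_ofReal_iff (by norm_num)).mp hchain
  norm_num at this

private lemma msl_centers (hW : ∀ i, Measurable (W i))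
    (hind : ProbabilityTheory.iIndepFun (m := fun _ => instB3) W μ)
    (hid : ∀ i, ProbabilityTheory.IdentDistrib (W i) (W 0) μ μ)
    {n : ℕ} {u : ℝ} (hu : 0 ≤ u)
    (h4 : 3/4 ≤ (μ {ω | ‖∑ i ∈ Finset.range n, W i ω‖ ≤ u}).toReal) :
    ∀ j ≤ n, 7/10 ≤ (μ {ω | ‖∑ i ∈ Finset.range j, W i ω‖ ≤ 10*u}).toReal := by
  classical
  have hmeasB : ∀ (s : Finset ℕ) (c : B),
      MeasurableSet {ω | ‖(∑ i ∈ s, W i ω) - c‖ ≤ u} := by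
    intro s c
    have hm : Measurable fun ω => ‖(∑ i ∈ s, W i ω) - c‖ :=
      ((Finset.measurable_sum s (fun i _ => hW i)).sub measurable_const).norm
    exact measurableSet_le hm measurable_const
  have hmeasN : MeasurableSet {ω | ‖∑ i ∈ Finset.range n, W i ω‖ ≤ u} := by
    have hm : Measurable fun ω => ‖∑ i ∈ Finset.range n, W i ω‖ :=
      (Finset.measurable_sum _ (fun i _ => hW i)).norm
    exact measurableSet_le hm measurable_const
  have hex : ∀ k, k ≤ n → ∃ a : B,
      7/10 ≤ (μ {ω | ‖(∑ i ∈ Finset.range k, W i ω) - a‖ ≤ u}).toReal :=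
    fun k hk => msl_center hW hind hk h4
  choose! a ha using hex
  -- identically distributed block sums
  have hIco : ∀ (k l : ℕ) (c : B),
      μ {ω | ‖(∑ i ∈ Finset.Ico k (k+l), W i ω) - c‖ ≤ u}
        = μ {ω | ‖(∑ i ∈ Finset.range l, W i ω) - c‖ ≤ u} := by
    intro k l c
    have hD : MeasurableSet {x : B | ‖x - c‖ ≤ u} := by
      have : Measurable fun x : B => ‖x - c‖ := by fun_prop
      exact measurableSet_le this measurable_const
    have hcard : (Finset.Ico k (k+l)).card = (Finset.range l).card := by
      rw [Nat.card_Ico, Finset.card_range]; omega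
    exact msl_prob_eq hW hind hid hcard hD
  have hsum2 : ∀ (k l : ℕ) (ω : Ω), ∑ i ∈ Finset.range (k+l), W i ω
      = (∑ i ∈ Finset.range k, W i ω) + ∑ i ∈ Finset.Ico k (k+l), W i ω :=
    fun k l ω => (Finset.sum_range_add_sum_Ico _ (by omega)).symm
  have hmeasIco : ∀ (k m : ℕ) (c : B),
      MeasurableSet {ω | ‖(∑ i ∈ Finset.Ico k m, W i ω) - c‖ ≤ u} := by
    intro k m c
    have hm : Measurable fun ω => ‖(∑ i ∈ Finset.Ico k m, W i ω) - c‖ :=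
      ((Finset.measurable_sum _ (fun i _ => hW i)).sub measurable_const).norm
    exact measurableSet_le hm measurable_const
  -- approximate additivity
  have P2 : ∀ k l, k + l ≤ n → ‖a (k+l) - a k - a l‖ ≤ 3*u := by
    intro k l hkl
    have h1 := ha k (by omega)
    have h2 : 7/10 ≤ (μ {ω | ‖(∑ i ∈ Finset.Ico k (k+l), W i ω) - a l‖ ≤ u}).toReal := by
      rw [hIco k l (a l)]; exact ha l (by omega)
    have h3 := ha (k+l) hkl
    obtain ⟨ω, hω⟩ := msl_nonempty3
      (D := {ω | ‖(∑ i ∈ Finset.range (k+l), W i ω) - a (k+l)‖ ≤ u})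
      (hmeasB (Finset.range k) (a k)) (hmeasIco k (k+l) (a l)) (by linarith)
    obtain ⟨⟨hω1, hω2⟩, hω3⟩ := hω
    simp only [Set.mem_setOf_eq] at hω1 hω2 hω3
    have hiden : a (k+l) - a k - a l =
        ((∑ i ∈ Finset.range k, W i ω) - a k)
        + ((∑ i ∈ Finset.Ico k (k+l), W i ω) - a l)
        - ((∑ i ∈ Finset.range (k+l), W i ω) - a (k+l)) := by
      rw [hsum2 k l ω]; abel
    calc ‖a (k+l) - a k - a l‖ ≤
        ‖((∑ i ∈ Finset.range k, W i ω) - a k)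
          + ((∑ i ∈ Finset.Ico k (k+l), W i ω) - a l)‖
        + ‖(∑ i ∈ Finset.range (k+l), W i ω) - a (k+l)‖ := by rw [hiden]; exact norm_sub_le _ _
      _ ≤ ‖(∑ i ∈ Finset.range k, W i ω) - a k‖
          + ‖(∑ i ∈ Finset.Ico k (k+l), W i ω) - a l‖
          + ‖(∑ i ∈ Finset.range (k+l), W i ω) - a (k+l)‖ := by
            have := norm_add_le ((∑ i ∈ Finset.range k, W i ω) - a k)
              ((∑ i ∈ Finset.Ico k (k+l), W i ω) - a l)
            linarith
      _ ≤ 3*u := by linarith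
  -- reflection
  have P3 : ∀ k, k ≤ n → ‖a k + a (n-k)‖ ≤ 3*u := by
    intro k hk
    have h1 := ha k hk
    have h2 : 7/10 ≤ (μ {ω | ‖(∑ i ∈ Finset.Ico k n, W i ω) - a (n-k)‖ ≤ u}).toReal := by
      have hn : k + (n-k) = n := by omega
      rw [show Finset.Ico k n = Finset.Ico k (k + (n-k)) by rw [hn],
        hIco k (n-k) (a (n-k))]
      exact ha (n-k) (by omega)
    obtain ⟨ω, hω⟩ := msl_nonempty3
      (D := {ω | ‖∑ i ∈ Finset.range n, W i ω‖ ≤ u})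
      (hmeasB (Finset.range k) (a k)) (hmeasIco k n (a (n-k))) (by linarith)
    obtain ⟨⟨hω1, hω2⟩, hω3⟩ := hω
    simp only [Set.mem_setOf_eq] at hω1 hω2 hω3
    have hsumn : ∑ i ∈ Finset.range n, W i ω
        = (∑ i ∈ Finset.range k, W i ω) + ∑ i ∈ Finset.Ico k n, W i ω :=
      (Finset.sum_range_add_sum_Ico _ hk).symm
    have hiden : a k + a (n-k) = (∑ i ∈ Finset.range n, W i ω)
        - ((∑ i ∈ Finset.range k, W i ω) - a k)
        - ((∑ i ∈ Finset.Ico k n, W i ω) - a (n-k)) := by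
      rw [hsumn]; abel
    calc ‖a k + a (n-k)‖ = ‖(∑ i ∈ Finset.range n, W i ω)
          - ((∑ i ∈ Finset.range k, W i ω) - a k)
          - ((∑ i ∈ Finset.Ico k n, W i ω) - a (n-k))‖ := by rw [hiden]
      _ ≤ ‖(∑ i ∈ Finset.range n, W i ω)
          - ((∑ i ∈ Finset.range k, W i ω) - a k)‖
          + ‖(∑ i ∈ Finset.Ico k n, W i ω) - a (n-k)‖ := norm_sub_le _ _
      _ ≤ ‖∑ i ∈ Finset.range n, W i ω‖ + ‖(∑ i ∈ Finset.range k, W i ω) - a k‖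
          + ‖(∑ i ∈ Finset.Ico k n, W i ω) - a (n-k)‖ := by
            have := norm_sub_le (∑ i ∈ Finset.range n, W i ω)
              ((∑ i ∈ Finset.range k, W i ω) - a k)
            linarith
      _ ≤ 3*u := by linarith
  have Pn : ‖a n‖ ≤ 2*u := by
    obtain ⟨ω, hω1, hω2⟩ := msl_nonempty2 (hmeasB (Finset.range n) (a n))
      (C := {ω | ‖∑ i ∈ Finset.range n, W i ω‖ ≤ u}) (by have := ha n le_rfl; linarith)
    simp only [Set.mem_setOf_eq] at hω1 hω2
    have : a n = (∑ i ∈ Finset.range n, W i ω)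
        - ((∑ i ∈ Finset.range n, W i ω) - a n) := by abel
    rw [this]
    calc ‖_ - _‖ ≤ ‖∑ i ∈ Finset.range n, W i ω‖
        + ‖(∑ i ∈ Finset.range n, W i ω) - a n‖ := norm_sub_le _ _
      _ ≤ 2*u := by linarith
  have P0 : ‖a 0‖ ≤ u := by
    have h1 := ha 0 (Nat.zero_le n)
    have hne : μ {ω | ‖(∑ i ∈ Finset.range 0, W i ω) - a 0‖ ≤ u} ≠ 0 := by
      intro h0
      rw [h0] at h1
      norm_num at h1
    obtain ⟨ω, hω⟩ := nonempty_of_measure_ne_zero hne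
    simp only [Set.mem_setOf_eq, Finset.range_zero, Finset.sum_empty, zero_sub, norm_neg] at hω
    exact hω
  -- bound all centers by 9u
  set M := (Finset.range (n+1)).sup' ⟨0, by simp⟩ (fun k => ‖a k‖) with hM
  have hMle : ∀ k, k ≤ n → ‖a k‖ ≤ M := by
    intro k hk
    exact Finset.le_sup' (fun k => ‖a k‖) (Finset.mem_range.mpr (Nat.lt_succ_of_le hk))
  have hM0 : 0 ≤ M := le_trans (norm_nonneg _) (hMle 0 (Nat.zero_le n))
  have claim1 : ∀ j, 1 ≤ j → 2*j ≤ n → ‖a j‖ ≤ (M + 3*u)/2 := by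
    intro j h1 h2
    have hP2 := P2 j j (by omega)
    have h2n : 2*‖a j‖ = ‖a j + a j‖ := by
      rw [← two_smul ℝ (a j), norm_smul]
      simp
    have : a j + a j = a (j+j) - (a (j+j) - a j - a j) := by abel
    have hb : ‖a j + a j‖ ≤ ‖a (j+j)‖ + ‖a (j+j) - a j - a j‖ := by
      rw [this]; exact norm_sub_le _ _
    have := hMle (j+j) (by omega)
    linarith
  have claim2 : ∀ j, j ≤ n → ‖a j‖ ≤ (M + 3*u)/2 + 3*u := by
    intro j hj
    rcases Nat.eq_zero_or_pos j with h0 | h1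
    · subst h0; linarith
    rcases eq_or_lt_of_le hj with hn' | hlt
    · subst hn'; linarith
    by_cases h2 : 2*j ≤ n
    · have := claim1 j h1 h2; linarith
    · push_neg at h2
      set k := n - j with hk
      have hk1 : 1 ≤ k := by omega
      have hk2 : 2*k ≤ n := by omega
      have hnk : n - k = j := by omega
      have hkn : k ≤ n := by omega
      have hP3 := P3 k hkn
      rw [hnk] at hP3
      have : a j = (a k + a j) - a k := by abel
      have hb : ‖a j‖ ≤ ‖a k + a j‖ + ‖a k‖ := by
        nth_rewrite 1 [this]
        exact norm_sub_le _ _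
      have := claim1 k hk1 hk2
      linarith
  have hM9 : M ≤ 9*u := by
    have : M ≤ (M + 3*u)/2 + 3*u := by
      apply Finset.sup'_le
      intro k hk
      exact claim2 k (by simpa [Finset.mem_range, Nat.lt_succ_iff] using hk)
    linarith
  -- conclusion
  intro j hj
  have hsub : {ω | ‖(∑ i ∈ Finset.range j, W i ω) - a j‖ ≤ u}
      ⊆ {ω | ‖∑ i ∈ Finset.range j, W i ω‖ ≤ 10*u} := by
    intro ω hω
    simp only [Set.mem_setOf_eq] at hω ⊢
    have h9 : ‖a j‖ ≤ 9*u := le_trans (hMle j hj) hM9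
    have : ∑ i ∈ Finset.range j, W i ω
        = ((∑ i ∈ Finset.range j, W i ω) - a j) + a j := by abel
    rw [this]
    calc ‖_ + _‖ ≤ ‖(∑ i ∈ Finset.range j, W i ω) - a j‖ + ‖a j‖ := norm_add_le _ _
      _ ≤ 10*u := by linarith
  calc (7:ℝ)/10 ≤ (μ {ω | ‖(∑ i ∈ Finset.range j, W i ω) - a j‖ ≤ u}).toReal := ha j hj
    _ ≤ (μ {ω | ‖∑ i ∈ Finset.range j, W i ω‖ ≤ 10*u}).toReal :=
        ENNReal.toReal_mono (measure_ne_top μ _) (measure_mono hsub)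

private lemma msl_ottaviani (hW : ∀ i, Measurable (W i))
    (hind : ProbabilityTheory.iIndepFun (m := fun _ => instB3) W μ)
    (hid : ∀ i, ProbabilityTheory.IdentDistrib (W i) (W 0) μ μ)
    {n : ℕ} {t v : ℝ} (hv : 0 < v) (htv : v < t)
    (hβ : ∀ j ≤ n, 7/10 ≤ (μ {ω | ‖∑ i ∈ Finset.range j, W i ω‖ ≤ v}).toReal) :
    (7/10) * (μ {ω | ∃ k ≤ n, t ≤ ‖∑ i ∈ Finset.range k, W i ω‖}).toReal
      ≤ (μ {ω | t - v ≤ ‖∑ i ∈ Finset.range n, W i ω‖}).toReal := by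
  classical
  set A : ℕ → Set Ω := fun k =>
    {ω | (∀ j, j < k → ‖∑ i ∈ Finset.range j, W i ω‖ < t)
      ∧ t ≤ ‖∑ i ∈ Finset.range k, W i ω‖} with hA
  set C : ℕ → Set Ω := fun k => {ω | ‖∑ i ∈ Finset.Ico k n, W i ω‖ ≤ v} with hC
  have hmeasS : ∀ (s : Finset ℕ), Measurable (fun ω => ∑ i ∈ s, W i ω) :=
    fun s => Finset.measurable_sum s (fun i _ => hW i)
  have hmeasA : ∀ k, MeasurableSet (A k) := by
    intro k
    have : A k = (⋂ j, ⋂ (_ : j < k), {ω | ‖∑ i ∈ Finset.range j, W i ω‖ < t})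
        ∩ {ω | t ≤ ‖∑ i ∈ Finset.range k, W i ω‖} := by
      ext ω
      simp only [hA, Set.mem_setOf_eq, Set.mem_inter_iff, Set.mem_iInter]
    rw [this]
    exact (MeasurableSet.iInter (fun j => MeasurableSet.iInter (fun _ =>
        measurableSet_lt (hmeasS _).norm measurable_const))).inter
      (measurableSet_le measurable_const (hmeasS _).norm)
  have hmeasC : ∀ k, MeasurableSet (C k) :=
    fun k => measurableSet_le (hmeasS _).norm measurable_const
  -- A's are pairwise disjoint
  have hdisjA : ∀ k l, k < l → Disjoint (A k) (A l) := by
    intro k l hkl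
    rw [Set.disjoint_left]
    intro ω hk hl
    exact absurd hk.2 (not_le.mpr (hl.1 k hkl))
  -- E as disjoint union
  have hE : {ω | ∃ k ≤ n, t ≤ ‖∑ i ∈ Finset.range k, W i ω‖}
      = ⋃ k ∈ Finset.range (n+1), A k := by
    ext ω
    simp only [Set.mem_setOf_eq, Set.mem_iUnion, Finset.mem_range, Nat.lt_succ_iff]
    constructor
    · rintro ⟨k, hk, hkt⟩
      have hex : ∃ j, t ≤ ‖∑ i ∈ Finset.range j, W i ω‖ := ⟨k, hkt⟩
      refine ⟨Nat.find hex, le_trans (Nat.find_min' hex hkt) hk, ?_, Nat.find_spec hex⟩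
      intro j hj
      exact not_le.mp (Nat.find_min hex hj)
    · rintro ⟨k, hk, _, hkt⟩
      exact ⟨k, hk, hkt⟩
  -- independence: μ (A k ∩ C k) = μ (A k) * μ (C k)
  have hindAC : ∀ k, μ (A k ∩ C k) = μ (A k) * μ (C k) := by
    intro k
    have hdisjF : Disjoint (Finset.range k) (Finset.Ico k n) := by
      simp only [Finset.disjoint_left, Finset.mem_Ico, Finset.mem_range]
      omega
    have hFG := hind.indepFun_finset (Finset.range k) (Finset.Ico k n) hdisjF hW
    set F : Ω → (↥(Finset.range k) → B) := fun ω i => W i ω with hF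
    set G : Ω → (↥(Finset.Ico k n) → B) := fun ω i => W i ω with hG
    set Φ : ℕ → (↥(Finset.range k) → B) → B := fun j x =>
      ∑ i ∈ Finset.univ.filter (fun i : ↥(Finset.range k) => (i : ℕ) < j), x i with hΦ
    have hΦmeas : ∀ j, Measurable (Φ j) :=
      fun j => Finset.measurable_sum _ (fun i _ => measurable_pi_apply i)
    have hΦF : ∀ j, j ≤ k → ∀ ω, Φ j (F ω) = ∑ i ∈ Finset.range j, W i ω := by
      intro j hj ω
      have h1 : Φ j (F ω)
          = ∑ i ∈ (Finset.range k).filter (fun i => i < j), W i ω := by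
        rw [hΦ]
        simp only
        rw [Finset.sum_filter, Finset.univ_eq_attach,
          Finset.sum_attach (Finset.range k) (fun m => if m < j then W m ω else 0),
          ← Finset.sum_filter]
      rw [h1]
      congr 1
      ext i
      simp only [Finset.mem_filter, Finset.mem_range]
      omega
    set U : Set (↥(Finset.range k) → B) :=
      {x | (∀ j, j < k → ‖Φ j x‖ < t) ∧ t ≤ ‖Φ k x‖} with hU
    set V : Set (↥(Finset.Ico k n) → B) := {x | ‖∑ i, x i‖ ≤ v} with hV
    have hUmeas : MeasurableSet U := by
      have : U = (⋂ j, ⋂ (_ : j < k), {x | ‖Φ j x‖ < t}) ∩ {x | t ≤ ‖Φ k x‖} := by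
        ext x
        simp only [hU, Set.mem_setOf_eq, Set.mem_inter_iff, Set.mem_iInter]
      rw [this]
      exact (MeasurableSet.iInter (fun j => MeasurableSet.iInter (fun _ =>
          measurableSet_lt (hΦmeas j).norm measurable_const))).inter
        (measurableSet_le measurable_const (hΦmeas k).norm)
    have hVmeas : MeasurableSet V :=
      measurableSet_le (Finset.measurable_sum _ (fun i _ => measurable_pi_apply i)).norm
        measurable_const
    have hAU : A k = F ⁻¹' U := by
      ext ω
      simp only [hA, hU, Set.mem_setOf_eq, Set.mem_preimage]
      constructor
      · rintro ⟨h1, h2⟩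
        exact ⟨fun j hj => by rw [hΦF j (le_of_lt hj) ω]; exact h1 j hj,
          by rw [hΦF k le_rfl ω]; exact h2⟩
      · rintro ⟨h1, h2⟩
        rw [hΦF k le_rfl ω] at h2
        exact ⟨fun j hj => by have := h1 j hj; rwa [hΦF j (le_of_lt hj) ω] at this, h2⟩
    have hCV : C k = G ⁻¹' V := by
      ext ω
      simp only [hC, hV, Set.mem_setOf_eq, Set.mem_preimage]
      rw [Finset.univ_eq_attach, Finset.sum_attach (Finset.Ico k n) (fun m => W m ω)]
    rw [hAU, hCV]
    exact hFG.measure_inter_preimage_eq_mul U V hUmeas hVmeas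
  -- lower bound μ (C k)
  have hCb : ∀ k, k ≤ n → ENNReal.ofReal (7/10) ≤ μ (C k) := by
    intro k hk
    have hD : MeasurableSet {x : B | ‖x‖ ≤ v} :=
      measurableSet_le measurable_norm measurable_const
    have hcard : (Finset.Ico k n).card = (Finset.range (n-k)).card := by
      rw [Nat.card_Ico, Finset.card_range]
    have := msl_prob_eq hW hind hid hcard hD
    have hCk : μ (C k) = μ {ω | ‖∑ i ∈ Finset.range (n-k), W i ω‖ ≤ v} := this
    rw [hCk]
    exact ENNReal.ofReal_le_of_le_toReal (hβ (n-k) (by omega))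
  -- A k ∩ C k ⊆ target
  have hsub : ∀ k, k ≤ n → A k ∩ C k ⊆ {ω | t - v ≤ ‖∑ i ∈ Finset.range n, W i ω‖} := by
    intro k hk ω hω
    obtain ⟨hωA, hωC⟩ := hω
    simp only [hA, hC, Set.mem_setOf_eq] at hωA hωC ⊢
    have hsn : ∑ i ∈ Finset.range k, W i ω
        = (∑ i ∈ Finset.range n, W i ω) - ∑ i ∈ Finset.Ico k n, W i ω := by
      rw [← Finset.sum_range_add_sum_Ico _ hk]
      abel
    have h1 : ‖∑ i ∈ Finset.range k, W i ω‖
        ≤ ‖∑ i ∈ Finset.range n, W i ω‖ + ‖∑ i ∈ Finset.Ico k n, W i ω‖ := by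
      rw [hsn]
      exact norm_sub_le _ _
    have := hωA.2
    linarith
  -- put it together in ENNReal
  have hmain : ENNReal.ofReal (7/10) * μ {ω | ∃ k ≤ n, t ≤ ‖∑ i ∈ Finset.range k, W i ω‖}
      ≤ μ {ω | t - v ≤ ‖∑ i ∈ Finset.range n, W i ω‖} := by
    have hPD : (↑(Finset.range (n+1)) : Set ℕ).PairwiseDisjoint (fun k => A k ∩ C k) := by
      intro k _ l _ hkl
      rcases lt_or_gt_of_ne hkl with h | h
      · exact Disjoint.mono Set.inter_subset_left Set.inter_subset_left (hdisjA k l h)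
      · exact Disjoint.mono Set.inter_subset_left Set.inter_subset_left (hdisjA l k h).symm
    have hPDA : (↑(Finset.range (n+1)) : Set ℕ).PairwiseDisjoint A := by
      intro k _ l _ hkl
      rcases lt_or_gt_of_ne hkl with h | h
      · exact hdisjA k l h
      · exact (hdisjA l k h).symm
    calc ENNReal.ofReal (7/10) * μ {ω | ∃ k ≤ n, t ≤ ‖∑ i ∈ Finset.range k, W i ω‖}
        = ENNReal.ofReal (7/10) * ∑ k ∈ Finset.range (n+1), μ (A k) := by
          rw [hE, measure_biUnion_finset hPDA (fun k _ => hmeasA k)]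
      _ = ∑ k ∈ Finset.range (n+1), ENNReal.ofReal (7/10) * μ (A k) := by
          rw [Finset.mul_sum]
      _ ≤ ∑ k ∈ Finset.range (n+1), μ (A k ∩ C k) := by
          apply Finset.sum_le_sum
          intro k hk
          rw [hindAC k, mul_comm]
          exact mul_le_mul_right (hCb k (by simpa [Nat.lt_succ_iff] using hk)) _
      _ = μ (⋃ k ∈ Finset.range (n+1), (A k ∩ C k)) := by
          rw [measure_biUnion_finset hPD (fun k _ => (hmeasA k).inter (hmeasC k))]
      _ ≤ μ {ω | t - v ≤ ‖∑ i ∈ Finset.range n, W i ω‖} := by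
          apply measure_mono
          apply Set.iUnion₂_subset
          intro k hk
          exact hsub k (by simpa [Nat.lt_succ_iff] using hk)
  -- to real
  have h1 := ENNReal.toReal_mono (measure_ne_top μ _) hmain
  rw [ENNReal.toReal_mul, ENNReal.toReal_ofReal (by norm_num : (0:ℝ) ≤ 7/10)] at h1
  exact h1
end MSHelpers


/-- Montgomery–Smith Lévy-type inequality: there is a universal constant `C`
such that for any i.i.d. sequence `W_1,…,W_n` in a separable Banach space and
any `t > 0`, `P(max_{k ≤ n} ‖∑_{i≤k} W_i‖ ≥ t) ≤ C · P(‖∑_{i≤n} W_i‖ ≥ t/C)`. -/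
theorem montgomery_smith_levy :
    ∃ C : ℝ, 0 < C ∧
      ∀ (Ω : Type) [inst : MeasurableSpace Ω] (ℙ : Measure Ω),
        IsProbabilityMeasure ℙ →
      ∀ (B : Type) [instB : NormedAddCommGroup B] [instB2 : NormedSpace ℝ B]
        [instB3 : MeasurableSpace B] [instB4 : BorelSpace B]
        [instB5 : SecondCountableTopology B],
      ∀ (W : ℕ → Ω → B), (∀ i, Measurable (W i)) →
        ProbabilityTheory.iIndepFun (m := fun _ => instB3) W ℙ →
        (∀ i, ProbabilityTheory.IdentDistrib (W i) (W 0) ℙ ℙ) →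
      ∀ (n : ℕ) (t : ℝ), 0 < t →
        (ℙ {ω | ∃ k ≤ n, t ≤ ‖∑ i ∈ Finset.range k, W i ω‖}).toReal ≤
          C * (ℙ {ω | t / C ≤ ‖∑ i ∈ Finset.range n, W i ω‖}).toReal := by
  refine ⟨30, by norm_num, ?_⟩
  intro Ω inst ℙ hprob B instB instB2 instB3 instB4 instB5 W hW hind hid n t ht
  haveI := hprob
  set p₀ := (ℙ {ω | t / 30 ≤ ‖∑ i ∈ Finset.range n, W i ω‖}).toReal with hp₀
  have hp₀0 : 0 ≤ p₀ := ENNReal.toReal_nonneg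
  have hLHS1 : (ℙ {ω | ∃ k ≤ n, t ≤ ‖∑ i ∈ Finset.range k, W i ω‖}).toReal ≤ 1 := by
    have h := prob_le_one (μ := ℙ) (s := {ω | ∃ k ≤ n, t ≤ ‖∑ i ∈ Finset.range k, W i ω‖})
    simpa using ENNReal.toReal_mono (by norm_num) h
  by_cases hcase : 1/4 ≤ p₀
  · linarith
  · push_neg at hcase
    -- P(‖S_n‖ ≤ t/30) ≥ 3/4
    have hmeasA : MeasurableSet {ω | t / 30 ≤ ‖∑ i ∈ Finset.range n, W i ω‖} :=
      measurableSet_le measurable_const (Finset.measurable_sum _ (fun i _ => hW i)).norm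
    have hcompl : (ℙ {ω | t / 30 ≤ ‖∑ i ∈ Finset.range n, W i ω‖}ᶜ).toReal = 1 - p₀ := by
      have h := measure_add_measure_compl (μ := ℙ) hmeasA
      have := congrArg ENNReal.toReal h
      rw [ENNReal.toReal_add (measure_ne_top ℙ _) (measure_ne_top ℙ _)] at this
      simp only [measure_univ, ENNReal.toReal_one] at this
      linarith
    have hsubc : {ω | t / 30 ≤ ‖∑ i ∈ Finset.range n, W i ω‖}ᶜ
        ⊆ {ω | ‖∑ i ∈ Finset.range n, W i ω‖ ≤ t/30} := by
      intro ω hω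
      simp only [Set.mem_compl_iff, Set.mem_setOf_eq, not_le] at hω ⊢
      linarith
    have h4 : 3/4 ≤ (ℙ {ω | ‖∑ i ∈ Finset.range n, W i ω‖ ≤ t/30}).toReal := by
      have := ENNReal.toReal_mono (measure_ne_top ℙ _) (measure_mono hsubc)
      rw [hcompl] at this
      linarith
    have hu : (0:ℝ) ≤ t/30 := by linarith
    have hβ := msl_centers hW hind hid hu h4
    have hv : (0:ℝ) < 10*(t/30) := by linarith
    have htv : 10*(t/30) < t := by linarith
    have hott := msl_ottaviani hW hind hid hv htv hβ
    have hsub2 : {ω | t - 10*(t/30) ≤ ‖∑ i ∈ Finset.range n, W i ω‖}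
        ⊆ {ω | t / 30 ≤ ‖∑ i ∈ Finset.range n, W i ω‖} := by
      intro ω hω
      simp only [Set.mem_setOf_eq] at hω ⊢
      linarith
    have h2 := ENNReal.toReal_mono (measure_ne_top ℙ _) (measure_mono hsub2)
    have hE0 : 0 ≤ (ℙ {ω | ∃ k ≤ n, t ≤ ‖∑ i ∈ Finset.range k, W i ω‖}).toReal :=
      ENNReal.toReal_nonneg
    linarith
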